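/- Let A ∈ Sc_{m+1} (a substitution algebra of dimension m+1, m ≥ 2) and let x ∈ A satisfy s_{[k/l]}x · s_{[l/k]}x = x for all k, l < m. Then x · s_{[k/m]}x = x · s_{[l/m]}x for all k, l < m; consequently, setting b = x · Π_{i∈Γ} s_{[i/m]}x for any non-empty finite Γ ⊆ m, the value of b does not depend on the choice of Γ. -/
import Mathlib

/-- A substitution algebra of dimension `α` (Pinter): a boolean algebra with
cylindrifiers `c i` and substitutions `s i j` (denoting `s_{[i/j]}`, the
substitution replacing `i` by `j`), satisfying axioms (1)–(9). -/
structure Sc (α : Type*) (A : Type*) [BooleanAlgebra A] where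
  c : α → A → A
  s : α → α → A → A
  c_bot : ∀ i, c i ⊥ = ⊥
  le_c : ∀ i x, x ≤ c i x
  c_inf_c : ∀ i x y, c i (x ⊓ c i y) = c i x ⊓ c i y
  c_c_comm : ∀ i j x, c i (c j x) = c j (c i x)
  s_id : ∀ i x, s i i x = x
  s_sup : ∀ i j x y, s i j (x ⊔ y) = s i j x ⊔ s i j y
  s_compl : ∀ i j x, s i j xᶜ = (s i j x)ᶜ
  s_c_eq : ∀ i j x, s i j (c i x) = c i x
  c_s : ∀ i j x, i ≠ j → c i (s i j x) = s i j x
  s_c_comm : ∀ i j k x, k ≠ i → k ≠ j → s i j (c k x) = c k (s i j x)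
  c_s_exch : ∀ i j x, c i (s j i x) = c j (s i j x)
  s_s_comm : ∀ i j k x, i ≠ j → i ≠ k → j ≠ k → s j i (s i k x) = s i k (s j i x)
  s_s_merge : ∀ l i j x, s l i (s j l x) = s l i (s j i x)

namespace Sc

variable {α A : Type*} [BooleanAlgebra A] (S : Sc α A)

lemma s_inf (i j : α) (x y : A) :
    S.s i j (x ⊓ y) = S.s i j x ⊓ S.s i j y := by
  have h : x ⊓ y = (xᶜ ⊔ yᶜ)ᶜ := by rw [compl_sup, compl_compl, compl_compl]
  rw [h, S.s_compl, S.s_sup, S.s_compl, S.s_compl, compl_sup, compl_compl,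
    compl_compl]

lemma s_mono (i j : α) {x y : A} (h : x ≤ y) : S.s i j x ≤ S.s i j y :=
  calc S.s i j x ≤ S.s i j x ⊔ S.s i j y := le_sup_left
    _ = S.s i j (x ⊔ y) := (S.s_sup i j x y).symm
    _ = S.s i j y := by rw [sup_eq_right.2 h]

/-- `s_{[i/k]} s_{[i/j]} y = s_{[i/j]} y` for `i ≠ j`. -/
lemma s_s_absorb {i j : α} (k : α) (x : A) (hij : i ≠ j) :
    S.s i k (S.s i j x) = S.s i j x := by
  conv_lhs => rw [← S.c_s i j x hij]
  rw [S.s_c_eq, S.c_s i j x hij]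

/-- substitutions with the same target commute: `s_{[a/c]} s_{[b/c]} = s_{[b/c]} s_{[a/c]}`. -/
lemma s_comm_same_target {a b c : α} (hab : a ≠ b) (hac : a ≠ c) (hbc : b ≠ c)
    (x : A) : S.s a c (S.s b c x) = S.s b c (S.s a c x) :=
  calc S.s a c (S.s b c x)
      = S.s a c (S.s b a x) := (S.s_s_merge a c b x).symm
    _ = S.s b a (S.s a c x) := (S.s_s_comm a b c x hab hac hbc).symm
    _ = S.s b c (S.s b a (S.s a c x)) := (S.s_s_absorb c _ hab.symm).symm
    _ = S.s b c (S.s a c (S.s b a x)) := by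
        rw [S.s_s_comm a b c x hab hac hbc]
    _ = S.s b c (S.s a c (S.s b c x)) := by rw [S.s_s_merge a c b x]
    _ = S.s b c (S.s a b (S.s b c x)) := by rw [← S.s_s_merge b c a (S.s b c x)]
    _ = S.s b c (S.s b c (S.s a b x)) := by
        rw [S.s_s_comm b a c x hab.symm hbc hac]
    _ = S.s b c (S.s a b x) := S.s_s_absorb c _ hbc
    _ = S.s b c (S.s a c x) := S.s_s_merge b c a x

end Sc

/-- In `Sc_{m+1}` (`m ≥ 2`), if `s_{[k/l]}x ⊓ s_{[l/k]}x = x` for all `k,l < m`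
then `x ⊓ s_{[k/m]}x = x ⊓ s_{[l/m]}x` for all `k,l < m`; consequently
`b = x ⊓ Π_{i∈Γ} s_{[i/m]}x` does not depend on the non-empty finite
`Γ ⊆ m`. -/
theorem stmt_17 (m : ℕ) (hm : 2 ≤ m) {A : Type*} [BooleanAlgebra A]
    (S : Sc (Fin (m + 1)) A) (x : A)
    (hx : ∀ k l : Fin (m + 1), k.val < m → l.val < m →
      S.s k l x ⊓ S.s l k x = x) :
    (∀ k l : Fin (m + 1), k.val < m → l.val < m →
      x ⊓ S.s k (Fin.last m) x = x ⊓ S.s l (Fin.last m) x) ∧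
    (∀ Γ : Finset (Fin (m + 1)), Γ.Nonempty → (∀ i ∈ Γ, i.val < m) →
      x ⊓ Γ.inf (fun i => S.s i (Fin.last m) x)
        = x ⊓ S.s 0 (Fin.last m) x) := by
  set mm : Fin (m + 1) := Fin.last m with hmm
  -- the key inequality
  have key : ∀ k l : Fin (m + 1), k.val < m → l.val < m →
      x ⊓ S.s k mm x ≤ x ⊓ S.s l mm x := by
    intro k l hk hl
    by_cases hkl : k = l
    · subst hkl; exact le_rfl
    · have hkm : k ≠ mm := by
        intro h; rw [h, hmm, Fin.val_last] at hk; exact lt_irrefl m hk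
      have hlm : l ≠ mm := by
        intro h; rw [h, hmm, Fin.val_last] at hl; exact lt_irrefl m hl
      have hlk : l ≠ k := fun h => hkl h.symm
      have hxlk : x ≤ S.s l k x := by
        conv_lhs => rw [← hx k l hk hl]
        exact inf_le_right
      have h1 : S.s l mm x = S.s l mm (S.s k mm x) ⊓ S.s l k x := by
        conv_lhs => rw [← hx k l hk hl]
        rw [S.s_inf, S.s_s_merge l mm k x, S.s_s_absorb mm x hlk]
      have h2 : S.s k mm x ≤ S.s l mm (S.s k mm x) :=
        calc S.s k mm x ≤ S.s k mm (S.s l k x) := S.s_mono k mm hxlk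
          _ = S.s k mm (S.s l mm x) := S.s_s_merge k mm l x
          _ = S.s l mm (S.s k mm x) :=
              S.s_comm_same_target hkl hkm hlm x
      rw [h1]
      exact le_inf inf_le_left
        (le_inf (le_trans inf_le_right h2) (le_trans inf_le_left hxlk))
  have keyeq : ∀ k l : Fin (m + 1), k.val < m → l.val < m →
      x ⊓ S.s k mm x = x ⊓ S.s l mm x :=
    fun k l hk hl => le_antisymm (key k l hk hl) (key l k hl hk)
  refine ⟨keyeq, ?_⟩
  have h0 : (0 : Fin (m + 1)).val < m := by
    simp only [Fin.val_zero]; omega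
  intro Γ
  induction Γ using Finset.induction_on with
  | empty => intro h; exact absurd h (by simp)
  | @insert a s ha ih =>
    intro _ hmem
    have haval : a.val < m := hmem a (Finset.mem_insert_self a s)
    rw [Finset.inf_insert]
    by_cases hs : s = ∅
    · subst hs
      rw [Finset.inf_empty, inf_top_eq]
      exact keyeq a 0 haval h0
    · have hsne : s.Nonempty := Finset.nonempty_iff_ne_empty.2 hs
      have hmem' : ∀ i ∈ s, i.val < m :=
        fun i hi => hmem i (Finset.mem_insert_of_mem hi)
      have ihs := ih hsne hmem'
      obtain ⟨j, hj⟩ := hsne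
      have h0a : x ⊓ s.inf (fun i => S.s i mm x) ≤ S.s a mm x :=
        calc x ⊓ s.inf (fun i => S.s i mm x)
            ≤ x ⊓ S.s j mm x := inf_le_inf_left x (Finset.inf_le hj)
          _ = x ⊓ S.s a mm x := keyeq j a (hmem' j hj) haval
          _ ≤ S.s a mm x := inf_le_right
      calc x ⊓ (S.s a mm x ⊓ s.inf (fun i => S.s i mm x))
          = S.s a mm x ⊓ (x ⊓ s.inf (fun i => S.s i mm x)) := inf_left_comm ..
        _ = (x ⊓ s.inf (fun i => S.s i mm x)) ⊓ S.s a mm x := inf_comm ..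
        _ = x ⊓ s.inf (fun i => S.s i mm x) := inf_eq_left.2 h0a
        _ = x ⊓ S.s 0 mm x := ihs
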